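/- For every odd integer k ≥ 1 and all real numbers a ≤ b, |∫_a^b err(x)^k dx| ≤ (1/(k+1)) · max(|a|, |b|)^{k+1} · ε^{k+1}. -/

import Mathlib

open MeasureTheory

/-- Greatest element of `F` below `x`. -/
noncomputable def flF (F : Set ℝ) (x : ℝ) : ℝ := sSup (F ∩ Set.Iic x)

/-- Least element of `F` above `x`. -/
noncomputable def ceF (F : Set ℝ) (x : ℝ) : ℝ := sInf (F ∩ Set.Ici x)

open Set

section aux
variable {F : Set ℝ}

lemma flF_spec (hF_closed : IsClosed F) (hF_below : ∀ x : ℝ, ∃ z ∈ F, z ≤ x) (x : ℝ) :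
    flF F x ∈ F ∧ flF F x ≤ x := by
  obtain ⟨z, hz, hzx⟩ := hF_below x
  have hne : (F ∩ Set.Iic x).Nonempty := ⟨z, hz, hzx⟩
  have hbdd : BddAbove (F ∩ Set.Iic x) := ⟨x, fun y hy => hy.2⟩
  have h := (hF_closed.inter isClosed_Iic).csSup_mem hne hbdd
  exact ⟨h.1, h.2⟩

lemma ceF_spec (hF_closed : IsClosed F) (hF_above : ∀ x : ℝ, ∃ z ∈ F, x ≤ z) (x : ℝ) :
    ceF F x ∈ F ∧ x ≤ ceF F x := by
  obtain ⟨z, hz, hzx⟩ := hF_above x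
  have hne : (F ∩ Set.Ici x).Nonempty := ⟨z, hz, hzx⟩
  have hbdd : BddBelow (F ∩ Set.Ici x) := ⟨x, fun y hy => hy.2⟩
  have h := (hF_closed.inter isClosed_Ici).csInf_mem hne hbdd
  exact ⟨h.1, h.2⟩

lemma le_flF {z x : ℝ} (hz : z ∈ F) (hzx : z ≤ x) : z ≤ flF F x :=
  le_csSup ⟨x, fun y hy => hy.2⟩ ⟨hz, hzx⟩

lemma ceF_le {z x : ℝ} (hz : z ∈ F) (hzx : x ≤ z) : ceF F x ≤ z :=
  csInf_le ⟨x, fun y hy => hy.2⟩ ⟨hz, hzx⟩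

lemma flF_eq_self (hF_closed : IsClosed F) (hF_below : ∀ x : ℝ, ∃ z ∈ F, z ≤ x)
    {x : ℝ} (hx : x ∈ F) : flF F x = x :=
  le_antisymm (flF_spec hF_closed hF_below x).2 (le_flF hx le_rfl)

lemma ceF_eq_self (hF_closed : IsClosed F) (hF_above : ∀ x : ℝ, ∃ z ∈ F, x ≤ z)
    {x : ℝ} (hx : x ∈ F) : ceF F x = x :=
  le_antisymm (ceF_le hx le_rfl) (ceF_spec hF_closed hF_above x).2

lemma gap_not_mem {x y : ℝ} (h1 : flF F x < y) (h2 : y < ceF F x) : y ∉ F := by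
  intro hyF
  rcases le_total y x with h | h
  · exact absurd (le_flF hyF h) (not_le.2 h1)
  · exact absurd (ceF_le hyF h) (not_le.2 h2)

lemma flF_gapconst (hF_closed : IsClosed F) (hF_below : ∀ x : ℝ, ∃ z ∈ F, z ≤ x)
    {x y : ℝ} (h1 : flF F x ≤ y) (h2 : y < ceF F x) : flF F y = flF F x := by
  have hy := flF_spec hF_closed hF_below y
  refine le_antisymm ?_ (le_flF (flF_spec hF_closed hF_below x).1 h1)
  by_contra h
  push_neg at h
  exact gap_not_mem h (lt_of_le_of_lt hy.2 h2) hy.1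

lemma ceF_gapconst (hF_closed : IsClosed F) (hF_above : ∀ x : ℝ, ∃ z ∈ F, x ≤ z)
    {x y : ℝ} (h1 : flF F x < y) (h2 : y ≤ ceF F x) : ceF F y = ceF F x := by
  have hy := ceF_spec hF_closed hF_above y
  refine le_antisymm (ceF_le (ceF_spec hF_closed hF_above x).1 h2) ?_
  by_contra h
  push_neg at h
  exact gap_not_mem (lt_of_lt_of_le h1 hy.2) h hy.1

/-- distance to nearest point of `F`. -/
noncomputable def dF (F : Set ℝ) (x : ℝ) : ℝ := min (x - flF F x) (ceF F x - x)

lemma dF_nonneg (hF_closed : IsClosed F) (hF_below : ∀ x : ℝ, ∃ z ∈ F, z ≤ x)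
    (hF_above : ∀ x : ℝ, ∃ z ∈ F, x ≤ z) (x : ℝ) : 0 ≤ dF F x :=
  le_min (by linarith [(flF_spec hF_closed hF_below x).2])
    (by linarith [(ceF_spec hF_closed hF_above x).2])

lemma dF_eq_infDist (hF_closed : IsClosed F) (hF_ne : F.Nonempty)
    (hF_below : ∀ x : ℝ, ∃ z ∈ F, z ≤ x) (hF_above : ∀ x : ℝ, ∃ z ∈ F, x ≤ z) (x : ℝ) :
    dF F x = Metric.infDist x F := by
  have hfl := flF_spec hF_closed hF_below x
  have hce := ceF_spec hF_closed hF_above x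
  refine le_antisymm ?_ ?_
  · by_contra hlt
    push_neg at hlt
    obtain ⟨z, hz, hdz⟩ := (Metric.infDist_lt_iff hF_ne).1 hlt
    rw [Real.dist_eq] at hdz
    refine absurd hdz (not_lt.2 ?_)
    rcases le_total z x with h | h
    · have := le_flF hz h
      calc dF F x ≤ x - flF F x := min_le_left _ _
        _ ≤ x - z := by linarith
        _ ≤ |x - z| := le_abs_self _
    · have := ceF_le hz h
      calc dF F x ≤ ceF F x - x := min_le_right _ _
        _ ≤ z - x := by linarith
        _ ≤ |x - z| := by rw [abs_sub_comm]; exact le_abs_self _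

  · refine le_min ?_ ?_
    · have := Metric.infDist_le_dist_of_mem hfl.1 (x := x)
      rw [Real.dist_eq, abs_of_nonneg (by linarith [hfl.2])] at this
      exact this
    · have := Metric.infDist_le_dist_of_mem hce.1 (x := x)
      rw [Real.dist_eq, abs_of_nonpos (by linarith [hce.2])] at this
      linarith [this]

end aux
section aux2
variable {F : Set ℝ}

/-- signed error of rounding-to-nearest with ties to ceiling. -/
noncomputable def eF (F : Set ℝ) (x : ℝ) : ℝ :=
  if ceF F x - x ≤ x - flF F x then ceF F x - x else flF F x - x

lemma abs_eF (hF_closed : IsClosed F) (hF_below : ∀ x : ℝ, ∃ z ∈ F, z ≤ x)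
    (hF_above : ∀ x : ℝ, ∃ z ∈ F, x ≤ z) (x : ℝ) : |eF F x| = dF F x := by
  have h1 := (flF_spec hF_closed hF_below x).2
  have h2 := (ceF_spec hF_closed hF_above x).2
  unfold eF dF
  split_ifs with h
  · rw [abs_of_nonneg (by linarith), min_eq_right h]
  · push_neg at h
    rw [abs_of_nonpos (by linarith), min_eq_left h.le]
    ring

lemma flF_mono (hF_below : ∀ x : ℝ, ∃ z ∈ F, z ≤ x) : Monotone (flF F) := by
  intro x y hxy
  obtain ⟨z, hz, hzx⟩ := hF_below x
  exact csSup_le_csSup ⟨y, fun w hw => hw.2⟩ ⟨z, hz, hzx⟩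
    (Set.inter_subset_inter_right _ (Set.Iic_subset_Iic.2 hxy))

lemma ceF_mono (hF_above : ∀ x : ℝ, ∃ z ∈ F, x ≤ z) : Monotone (ceF F) := by
  intro x y hxy
  obtain ⟨z, hz, hzy⟩ := hF_above y
  exact csInf_le_csInf ⟨x, fun w hw => hw.2⟩ ⟨z, hz, hzy⟩
    (Set.inter_subset_inter_right _ (Set.Ici_subset_Ici.2 hxy))

lemma eF_measurable (hF_below : ∀ x : ℝ, ∃ z ∈ F, z ≤ x)
    (hF_above : ∀ x : ℝ, ∃ z ∈ F, x ≤ z) : Measurable (eF F) := by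
  have hm1 : Measurable (flF F) := (flF_mono hF_below).measurable
  have hm2 : Measurable (ceF F) := (ceF_mono hF_above).measurable
  exact Measurable.ite (measurableSet_le (hm2.sub measurable_id) (measurable_id.sub hm1))
    (hm2.sub measurable_id) (hm1.sub measurable_id)

end aux2
section aux3
variable {F : Set ℝ}

lemma hasDerivWithinAt_GF (hF_closed : IsClosed F) (hF_ne : F.Nonempty)
    (hF_below : ∀ x : ℝ, ∃ z ∈ F, z ≤ x) (hF_above : ∀ x : ℝ, ∃ z ∈ F, x ≤ z)
    (k : ℕ) (hk : 1 ≤ k) (hodd : Odd k) (x : ℝ) :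
    HasDerivWithinAt (fun y => -(dF F y) ^ (k + 1) / (k + 1 : ℝ)) ((eF F x) ^ k)
      (Set.Ici x) x := by
  have hk1 : (0 : ℝ) < (k : ℝ) + 1 := by positivity
  have hk1' : ((k : ℝ) + 1) ≠ 0 := ne_of_gt hk1
  by_cases hxF : x ∈ F
  · -- at points of F : derivative 0
    have hfl : flF F x = x := flF_eq_self hF_closed hF_below hxF
    have hce : ceF F x = x := ceF_eq_self hF_closed hF_above hxF
    have heF : eF F x = 0 := by unfold eF; rw [hfl, hce]; simp
    have hdx : dF F x = 0 := by unfold dF; rw [hfl, hce]; simp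
    rw [heF, zero_pow (by omega : k ≠ 0)]
    apply HasDerivAt.hasDerivWithinAt
    rw [hasDerivAt_iff_isLittleO]
    rw [Asymptotics.isLittleO_iff]
    intro c hc
    rw [Metric.eventually_nhds_iff]
    refine ⟨min c 1, lt_min hc one_pos, fun y hy => ?_⟩
    rw [Real.dist_eq] at hy
    have hd1 : dF F y ≤ |y - x| := by
      rw [dF_eq_infDist hF_closed hF_ne hF_below hF_above]
      have := Metric.infDist_le_dist_of_mem hxF (x := y)
      rwa [Real.dist_eq] at this
    have hd0 : 0 ≤ dF F y := dF_nonneg hF_closed hF_below hF_above y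
    have h1 : dF F y ^ (k + 1) ≤ |y - x| ^ (k + 1) := pow_le_pow_left₀ hd0 hd1 _
    have h2 : |y - x| ^ (k + 1) ≤ c * |y - x| := by
      rw [pow_succ]
      apply mul_le_mul_of_nonneg_right _ (abs_nonneg _)
      calc |y - x| ^ k ≤ |y - x| ^ 1 :=
            pow_le_pow_of_le_one (abs_nonneg _) (le_of_lt (lt_of_lt_of_le hy (min_le_right _ _))) hk
        _ = |y - x| := pow_one _
        _ ≤ c := le_of_lt (lt_of_lt_of_le hy (min_le_left _ _))
    have e1 : -(dF F y) ^ (k + 1) / ((k : ℝ) + 1) - -(dF F x) ^ (k + 1) / ((k : ℝ) + 1)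
        - (y - x) • (0 : ℝ) = -((dF F y) ^ (k + 1) / ((k : ℝ) + 1)) := by
      rw [hdx, zero_pow (by omega : k + 1 ≠ 0), smul_zero]; ring
    show ‖_‖ ≤ c * ‖y - x‖
    rw [e1, Real.norm_eq_abs, Real.norm_eq_abs, abs_neg, abs_of_nonneg (by positivity)]
    calc dF F y ^ (k + 1) / ((k : ℝ) + 1) ≤ |y - x| ^ (k + 1) / ((k : ℝ) + 1) := by gcongr
      _ ≤ |y - x| ^ (k + 1) := div_le_self (by positivity) (by linarith)
      _ ≤ c * |y - x| := h2
  · -- in a gap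
    have hfl := flF_spec hF_closed hF_below x
    have hce := ceF_spec hF_closed hF_above x
    set f := flF F x with hfdef
    set g := ceF F x with hgdef
    have hfx : f < x := lt_of_le_of_ne hfl.2 (fun h => hxF (h ▸ hfl.1))
    have hxg : x < g := lt_of_le_of_ne hce.2 (fun h => hxF (h ▸ hce.1))
    have hfg : f < g := lt_trans hfx hxg
    have keyfl : ∀ y ∈ Set.Ioo f g, flF F y = f := fun y hy =>
      flF_gapconst hF_closed hF_below hy.1.le hy.2
    have keyce : ∀ y ∈ Set.Ioo f g, ceF F y = g := fun y hy =>
      ceF_gapconst hF_closed hF_above hy.1 hy.2.le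
    by_cases h2 : f + g ≤ 2 * x
    · -- right half (including midpoint): dF = g - y locally on the right
      have heF : eF F x = g - x := by unfold eF; rw [if_pos (by linarith)]
      rw [heF]
      have hD : HasDerivWithinAt (fun y => -(g - y) ^ (k + 1) / ((k : ℝ) + 1))
          ((g - x) ^ k) (Set.Ici x) x := by
        have h0 : HasDerivAt (fun y : ℝ => g - y) (-1) x := (hasDerivAt_id x).const_sub g
        have h1 := ((h0.pow (k + 1)).neg.div_const ((k : ℝ) + 1))
        refine h1.hasDerivWithinAt.congr_deriv ?_
        rw [Nat.add_sub_cancel]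
        push_cast
        field_simp
      refine hD.congr_of_eventuallyEq ?_ ?_
      · have hmem : Set.Ico x g ∈ nhdsWithin x (Set.Ici x) := by
          rw [← Set.Ici_inter_Iio]
          exact Filter.inter_mem self_mem_nhdsWithin
            (mem_nhdsWithin_of_mem_nhds (Iio_mem_nhds hxg))
        filter_upwards [hmem] with y hy
        have hy' : y ∈ Set.Ioo f g := ⟨lt_of_lt_of_le hfx hy.1, hy.2⟩
        show -(dF F y) ^ (k + 1) / ((k : ℝ) + 1) = _
        unfold dF
        rw [keyfl y hy', keyce y hy', min_eq_right (by nlinarith [hy.1])]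
      · show -(dF F x) ^ (k + 1) / ((k : ℝ) + 1) = _
        unfold dF
        rw [← hfdef, ← hgdef, min_eq_right (by linarith)]
    · -- left half: dF = y - f locally
      push_neg at h2
      have heF : eF F x = f - x := by unfold eF; rw [if_neg (by push_neg; linarith)]
      rw [heF]
      apply HasDerivAt.hasDerivWithinAt
      have hD : HasDerivAt (fun y => -(y - f) ^ (k + 1) / ((k : ℝ) + 1))
          ((f - x) ^ k) x := by
        have h0 : HasDerivAt (fun y : ℝ => y - f) 1 x := (hasDerivAt_id x).sub_const f
        have h1 := ((h0.pow (k + 1)).neg.div_const ((k : ℝ) + 1))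
        refine h1.congr_deriv ?_
        have : (f - x) ^ k = -(x - f) ^ k := by
          rw [← neg_sub x f, hodd.neg_pow]
        rw [this, Nat.add_sub_cancel]
        push_cast
        field_simp
      refine hD.congr_of_eventuallyEq ?_
      have hopen : IsOpen (Set.Ioo f ((f + g) / 2)) := isOpen_Ioo
      have hxmem : x ∈ Set.Ioo f ((f + g) / 2) := ⟨hfx, by linarith⟩
      filter_upwards [hopen.mem_nhds hxmem] with y hy
      have hy' : y ∈ Set.Ioo f g := ⟨hy.1, by nlinarith [hy.2]⟩
      show -(dF F y) ^ (k + 1) / ((k : ℝ) + 1) = _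
      unfold dF
      rw [keyfl y hy', keyce y hy', min_eq_left (by nlinarith [hy.2])]

end aux3
section aux4
variable {F : Set ℝ}

lemma midpoints_countable (hF_closed : IsClosed F) (hF_below : ∀ x : ℝ, ∃ z ∈ F, z ≤ x)
    (hF_above : ∀ x : ℝ, ∃ z ∈ F, x ≤ z) :
    Set.Countable {x : ℝ | x ∉ F ∧ flF F x + ceF F x = 2 * x} := by
  classical
  set M := {x : ℝ | x ∉ F ∧ flF F x + ceF F x = 2 * x} with hM
  have hq : ∀ x : ℝ, ∃ q : ℚ, x ∈ M → flF F x < (q : ℝ) ∧ (q : ℝ) < x := by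
    intro x
    by_cases hx : x ∈ M
    · have hflx := flF_spec hF_closed hF_below x
      have hfx : flF F x < x := lt_of_le_of_ne hflx.2 (fun h => hx.1 (h ▸ hflx.1))
      obtain ⟨q, hq1, hq2⟩ := exists_rat_btwn hfx
      exact ⟨q, fun _ => ⟨hq1, hq2⟩⟩
    · exact ⟨0, fun h => absurd h hx⟩
  choose q hq using hq
  have key : ∀ x ∈ M, ∀ y ∈ M, x < y → (q x : ℝ) < (q y : ℝ) := by
    intro x hx y hy hxy
    obtain ⟨hq1x, hq2x⟩ := hq x hx
    obtain ⟨hq1y, hq2y⟩ := hq y hy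
    have hcex := ceF_spec hF_closed hF_above x
    have hxce : x < ceF F x := lt_of_le_of_ne hcex.2 (fun h => hx.1 (h.symm ▸ hcex.1))
    have hceley : ceF F x ≤ y := by
      by_contra h
      push_neg at h
      have hfly : flF F y = flF F x := flF_gapconst hF_closed hF_below
        (le_of_lt (lt_of_le_of_lt (flF_spec hF_closed hF_below x).2 hxy)) h
      have hcey : ceF F y = ceF F x := ceF_gapconst hF_closed hF_above
        (lt_of_lt_of_le (lt_of_le_of_ne (flF_spec hF_closed hF_below x).2
          (fun h' => hx.1 (h' ▸ (flF_spec hF_closed hF_below x).1))) hxy.le) h.le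
      have e1 := hx.2
      have e2 := hy.2
      rw [hfly, hcey] at e2
      linarith
    have : ceF F x ≤ flF F y := le_flF hcex.1 hceley
    calc (q x : ℝ) < x := hq2x
      _ < ceF F x := hxce
      _ ≤ flF F y := this
      _ < (q y : ℝ) := hq1y
  rw [Set.countable_iff_exists_injOn]
  refine ⟨fun x => Encodable.encode (q x), fun x hx y hy hxy => ?_⟩
  have hqeq : q x = q y := Encodable.encode_injective hxy
  rcases lt_trichotomy x y with h | h | h
  · exact absurd (by exact_mod_cast hqeq.ge) (not_le.2 (key x hx y hy h))
  · exact h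
  · exact absurd (by exact_mod_cast hqeq.le) (not_le.2 (key y hy x hx h))

end aux4

theorem error_int_nearest_odd_mult
    (F : Set ℝ) (hF_closed : IsClosed F) (hF_ne : F.Nonempty)
    (hF_below : ∀ x : ℝ, ∃ z ∈ F, z ≤ x) (hF_above : ∀ x : ℝ, ∃ z ∈ F, x ≤ z)
    (rd : ℝ → ℝ) (hrd_meas : Measurable rd)
    (hrd_mem : ∀ x : ℝ, rd x = flF F x ∨ rd x = ceF F x)
    (hrd_near : ∀ x : ℝ, |rd x - x| = min (x - flF F x) (ceF F x - x))
    (ε : ℝ) (hε0 : 0 ≤ ε) (hε1 : ε < 1)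
    (hbound : ∀ x : ℝ, |rd x - x| ≤ ε * |x|)
    (k : ℕ) (hk : 1 ≤ k) (hodd : Odd k) (a b : ℝ) (hab : a ≤ b) :
    |∫ x in a..b, (rd x - x) ^ k|
      ≤ (1 / (k + 1)) * max |a| |b| ^ (k + 1) * ε ^ (k + 1) := by
  classical
  set M := max |a| |b| with hMdef
  have hM0 : 0 ≤ M := le_trans (abs_nonneg a) (le_max_left _ _)
  have hk1 : (0 : ℝ) < (k : ℝ) + 1 := by positivity
  set G : ℝ → ℝ := fun y => -(dF F y) ^ (k + 1) / (k + 1 : ℝ) with hGdef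
  -- continuity of G
  have hGcont : Continuous G := by
    have : G = fun y => -(Metric.infDist y F) ^ (k + 1) / (k + 1 : ℝ) := by
      funext y
      show -(dF F y) ^ (k + 1) / (k + 1 : ℝ) = _
      rw [dF_eq_infDist hF_closed hF_ne hF_below hF_above]
    rw [this]
    exact (((Metric.continuous_infDist_pt F).pow (k + 1)).neg).div_const _
  -- derivative
  have hGderiv : ∀ x ∈ Set.Ioo a b, HasDerivWithinAt G ((eF F x) ^ k) (Set.Ioi x) x :=
    fun x _ => (hasDerivWithinAt_GF hF_closed hF_ne hF_below hF_above k hk hodd x).mono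
      Set.Ioi_subset_Ici_self
  -- integrability of eF ^ k
  have habs : ∀ x, |eF F x| = |rd x - x| := by
    intro x
    rw [abs_eF hF_closed hF_below hF_above x]
    unfold dF
    exact (hrd_near x).symm
  have hint : IntervalIntegrable (fun x => eF F x ^ k) volume a b := by
    rw [intervalIntegrable_iff]
    refine Integrable.mono' (g := fun _ => (ε * M) ^ k)
      (integrableOn_const measure_Ioc_lt_top.ne)
      (((eF_measurable hF_below hF_above).pow_const k).aestronglyMeasurable) ?_
    rw [ae_restrict_iff' measurableSet_uIoc]
    refine Filter.Eventually.of_forall fun x hx => ?_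
    rw [Set.uIoc_of_le hab] at hx
    have hxM : |x| ≤ M := by
      rw [abs_le]
      constructor
      · have : -|a| ≤ a := neg_abs_le a
        have h2 : |a| ≤ M := le_max_left _ _
        linarith [hx.1.le]
      · exact le_trans hx.2 (le_trans (le_abs_self b) (le_max_right _ _))
    have h1 : |eF F x| ≤ ε * M := by
      rw [habs x]
      exact le_trans (hbound x) (mul_le_mul_of_nonneg_left hxM hε0)
    calc ‖eF F x ^ k‖ = |eF F x| ^ k := by rw [Real.norm_eq_abs, abs_pow]
      _ ≤ (ε * M) ^ k := pow_le_pow_left₀ (abs_nonneg _) h1 k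
  -- FTC
  have hFTC : ∫ x in a..b, eF F x ^ k = G b - G a :=
    intervalIntegral.integral_eq_sub_of_hasDeriv_right_of_le hab
      (hGcont.continuousOn) hGderiv hint
  -- a.e. equality of integrands
  have hsub : {x : ℝ | (rd x - x) ^ k ≠ eF F x ^ k}
      ⊆ {x : ℝ | x ∉ F ∧ flF F x + ceF F x = 2 * x} := by
    intro x hx
    by_contra hmem
    apply hx
    by_cases hxF : x ∈ F
    · have hfl : flF F x = x := flF_eq_self hF_closed hF_below hxF
      have hce : ceF F x = x := ceF_eq_self hF_closed hF_above hxF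
      have h1 : rd x - x = 0 := by
        have h0 := hrd_near x
        rw [hfl, hce, sub_self, min_self] at h0
        exact abs_eq_zero.1 h0
      have h2 : eF F x = 0 := by unfold eF; rw [hfl, hce]; simp
      rw [h1, h2]
    · have hnotmid : flF F x + ceF F x ≠ 2 * x := by
        intro h; exact hmem ⟨hxF, h⟩
      have hfl := flF_spec hF_closed hF_below x
      have hce := ceF_spec hF_closed hF_above x
      have hfx : flF F x < x := lt_of_le_of_ne hfl.2 (fun h => hxF (h ▸ hfl.1))
      have hxg : x < ceF F x := lt_of_le_of_ne hce.2 (fun h => hxF (h.symm ▸ hce.1))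
      rcases hrd_mem x with h | h
      · -- rounds down
        have hmin : x - flF F x ≤ ceF F x - x := by
          have := hrd_near x
          rw [h, abs_of_nonpos (by linarith)] at this
          rcases min_cases (x - flF F x) (ceF F x - x) with ⟨h1, h2⟩ | ⟨h1, h2⟩
          · exact h2
          · rw [h1] at this; linarith
        have hstrict : x - flF F x < ceF F x - x :=
          lt_of_le_of_ne hmin (fun h' => hnotmid (by linarith))
        have heF : eF F x = flF F x - x := by unfold eF; rw [if_neg (by push_neg; linarith)]
        rw [h, heF]
      · -- rounds up
        have hmin : ceF F x - x ≤ x - flF F x := by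
          have := hrd_near x
          rw [h, abs_of_nonneg (by linarith)] at this
          rcases min_cases (x - flF F x) (ceF F x - x) with ⟨h1, h2⟩ | ⟨h1, h2⟩
          · rw [h1] at this; linarith
          · exact h2.le
        have heF : eF F x = ceF F x - x := by unfold eF; rw [if_pos hmin]
        rw [h, heF]
  have hae : (fun x => (rd x - x) ^ k) =ᵐ[volume] fun x => eF F x ^ k := by
    have hnull : volume {x : ℝ | (rd x - x) ^ k ≠ eF F x ^ k} = 0 :=
      measure_mono_null hsub
        ((midpoints_countable hF_closed hF_below hF_above).measure_zero _)
    exact hnull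
  have hcongr : ∫ x in a..b, (rd x - x) ^ k = ∫ x in a..b, eF F x ^ k :=
    intervalIntegral.integral_congr_ae (hae.mono fun x hx _ => hx)
  rw [hcongr, hFTC]
  -- final bound
  have hdle : ∀ x : ℝ, |x| ≤ M → dF F x ≤ ε * M := by
    intro x hx
    have := habs x
    rw [abs_eF hF_closed hF_below hF_above x] at this
    rw [this]
    exact le_trans (hbound x) (mul_le_mul_of_nonneg_left hx hε0)
  have hAa : dF F a ≤ ε * M := hdle a (le_max_left _ _)
  have hBb : dF F b ≤ ε * M := hdle b (le_max_right _ _)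
  have hA0 : 0 ≤ dF F a := dF_nonneg hF_closed hF_below hF_above a
  have hB0 : 0 ≤ dF F b := dF_nonneg hF_closed hF_below hF_above b
  have hApow : dF F a ^ (k + 1) ≤ (ε * M) ^ (k + 1) := pow_le_pow_left₀ hA0 hAa _
  have hBpow : dF F b ^ (k + 1) ≤ (ε * M) ^ (k + 1) := pow_le_pow_left₀ hB0 hBb _
  have hA0p : 0 ≤ dF F a ^ (k + 1) := by positivity
  have hB0p : 0 ≤ dF F b ^ (k + 1) := by positivity
  have hGba : G b - G a = (dF F a ^ (k + 1) - dF F b ^ (k + 1)) / ((k : ℝ) + 1) := by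
    rw [hGdef]; push_cast; ring
  rw [hGba, abs_div, abs_of_pos hk1]
  have hnum : |dF F a ^ (k + 1) - dF F b ^ (k + 1)| ≤ (ε * M) ^ (k + 1) := by
    rw [abs_sub_le_iff]
    constructor <;> linarith
  calc |dF F a ^ (k + 1) - dF F b ^ (k + 1)| / ((k : ℝ) + 1)
      ≤ (ε * M) ^ (k + 1) / ((k : ℝ) + 1) := by gcongr
    _ = 1 / ((k : ℝ) + 1) * M ^ (k + 1) * ε ^ (k + 1) := by
        rw [mul_pow]; ring
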